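/- arXiv:2208.03259 — 7 statements merged into one kernel-verified Lean document; each statement's English description precedes it below -/
import Mathlib

section
/- In the abstract dressing-operator setting, the commutator of X with s⁻¹ is given by X·s⁻¹ − s⁻¹·X = s⁻¹·y, i.e. [X, s⁻¹] = s⁻¹·z·(1−z)⁻¹. (This is the identity [X, S⁻¹] = S⁻¹ Z/(1−Z) from the paper's dressing-operator lemma, using [h, s⁻¹] = −s⁻¹ and the fact that s⁻¹ commutes with any expression in z.) -/
/-- in the abstract dressing-operator setting (A an associative unital
ℚ-algebra, s invertible with inverse si, h·s − s·h = s, c central, z = c·s²,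
g = (1−z)⁻¹, y = z·g, X = −(1/2)(h·y + y·h)), one has [X, s⁻¹] = s⁻¹·z·(1−z)⁻¹,
i.e. X·si − si·X = si·y. -/
theorem dressing_comm_X_sinv (A : Type*) [Ring A] [Algebra ℚ A]
    (s si h c g z y X : A)
    (hs : s * si = 1) (hs' : si * s = 1)
    (hh : h * s - s * h = s)
    (hc : ∀ a : A, c * a = a * c)
    (hz : z = c * s ^ 2)
    (hg : (1 - z) * g = 1) (hg' : g * (1 - z) = 1)
    (hy : y = z * g)
    (hX : X = -((1 / 2 : ℚ) • (h * y + y * h))) :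
    X * si - si * X = si * y := by
  -- si commutes with z
  have hsiz : si * z = z * si := by
    rw [hz, pow_two]
    calc si * (c * (s * s)) = (si * c) * (s * s) := by rw [mul_assoc]
    _ = (c * si) * (s * s) := by rw [hc si]
    _ = c * (si * s * s) := by noncomm_ring
    _ = c * s := by rw [hs', one_mul]
    _ = c * (s * (s * si)) := by rw [hs, mul_one]
    _ = c * (s * s) * si := by noncomm_ring
  -- si commutes with g
  have hsig : si * g = g * si := by
    have h1 : si * (1 - z) = (1 - z) * si := by
      rw [mul_sub, sub_mul, mul_one, one_mul, hsiz]
    calc si * g = g * ((1 - z) * (si * g)) := by rw [← mul_assoc, hg', one_mul]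
    _ = g * (si * (1 - z) * g) := by rw [← mul_assoc (1-z) si g, ← h1]
    _ = g * (si * ((1 - z) * g)) := by rw [mul_assoc si]
    _ = g * si := by rw [hg, mul_one]
  -- si commutes with y
  have hysi : y * si = si * y := by
    rw [hy, mul_assoc, ← hsig, ← mul_assoc, ← hsiz, mul_assoc]
  -- h * si - si * h = -si
  have hhsi : h * si - si * h = -si := by
    have e : si * (h * s - s * h) * si = si * s * si := by rw [hh]
    have e1 : si * (h * s) * si - si * (s * h) * si = si := by
      rw [← sub_mul, ← mul_sub, e, hs', one_mul]
    have e2 : si * (h * s) * si = si * h := by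
      calc si * (h * s) * si = si * h * (s * si) := by noncomm_ring
      _ = si * h := by rw [hs, mul_one]
    have e3 : si * (s * h) * si = h * si := by
      calc si * (s * h) * si = (si * s) * (h * si) := by noncomm_ring
      _ = h * si := by rw [hs', one_mul]
    rw [e2, e3] at e1
    linear_combination (norm := noncomm_ring) -e1
  have M : (h * y + y * h) * si - si * (h * y + y * h) = -(si * y) - si * y := by
    linear_combination (norm := noncomm_ring)
      hhsi * y + y * hhsi + h * hysi + hysi * h - hysi
  rw [hX, neg_mul, mul_neg, sub_neg_eq_add, smul_mul_assoc, mul_smul_comm,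
    ← smul_neg, ← smul_add]
  have M2 : -((h * y + y * h) * si) + si * (h * y + y * h) = si * y + si * y := by
    linear_combination (norm := noncomm_ring) -M
  rw [M2, ← two_smul ℚ (si * y), smul_smul]
  norm_num
end

section
/- In the abstract dressing-operator setting, the commutator of X² with s⁻² satisfies X²·s⁻² − s⁻²·X² = 2c·(X·g + g·X), i.e. [X², S⁻²] = (t/u)·{X, 1/(1−Z)} in the paper's notation (where t/u = 2c). -/
/-- in the abstract dressing-operator setting, the commutator of X² with s⁻²
satisfies [X², s⁻²] = 2c·(X·g + g·X), i.e. [X², S⁻²] = (t/u)·{X, 1/(1−Z)}. -/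
theorem dressing_comm_Xsq_sinvsq (A : Type*) [Ring A] [Algebra ℚ A]
    (s si h c g z y X : A)
    (hs : s * si = 1) (hs' : si * s = 1)
    (hh : h * s - s * h = s)
    (hc : ∀ a : A, c * a = a * c)
    (hz : z = c * s ^ 2)
    (hg : (1 - z) * g = 1) (hg' : g * (1 - z) = 1)
    (hy : y = z * g)
    (hX : X = -((1 / 2 : ℚ) • (h * y + y * h))) :
    X ^ 2 * si ^ 2 - si ^ 2 * X ^ 2 = 2 * c * (X * g + g * X) := by
  have hzs : s * z = z * s := by
    linear_combination (norm := noncomm_ring) s * hz - hz * s - hc s * s * s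
  have hzsi : si * z = z * si := by
    linear_combination (norm := noncomm_ring) - si * hzs * si + hs' * z * si - si * z * hs
  have hgz : g * z = z * g := by
    linear_combination (norm := noncomm_ring) hg - hg'
  have hgsi : si * g = g * si := by
    linear_combination (norm := noncomm_ring) - hg' * si * g + g * hzsi * g + g * si * hg
  have hsih : si * h = h * si + si := by
    linear_combination (norm := noncomm_ring) si * hh * si - si * h * hs + hs' * (h * si + si)
  have hs2i : s ^ 2 * si ^ 2 = 1 := by
    linear_combination (norm := noncomm_ring) s * hs * si + hs
  have hzsi2 : z * si ^ 2 = c := by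
    linear_combination (norm := noncomm_ring) hz * si * si + c * hs2i
  have hsi2z : si ^ 2 * z = c := by
    linear_combination (norm := noncomm_ring) si * hzsi + hzsi * si + hzsi2
  have hhz : h * z = z * h + 2 * z := by
    linear_combination (norm := noncomm_ring)
      h * hz - hz * h - 2 * hz - hc h * s * s + c * hh * s + c * s * hh
  have hhg : h * g = g * h + 2 * (z * (g * g)) := by
    linear_combination (norm := noncomm_ring)
      - hg' * h * g + 2 * (hgz * g) + g * hhz * g + g * h * hg
  have hgone : g = 1 + z * g := by
    linear_combination (norm := noncomm_ring) hg
  have hyh : h * y = y * h + 2 * (y * g) := by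
    linear_combination (norm := noncomm_ring)
      h * hy - hy * h - 2 * (hy * g) + hhz * g + z * hhg - 2 * (z * g * hgone)
        - 2 * (z * hgz * g)
  have hsum : h * y + y * h = (h * y - y * g) + (h * y - y * g) := by
    linear_combination (norm := noncomm_ring) - hyh
  have hXalt : X = y * g - h * y := by
    rw [hX, hsum, ← two_smul ℚ, smul_smul]
    norm_num [neg_sub]
  have hgsi2 : si ^ 2 * g = g * si ^ 2 := by
    linear_combination (norm := noncomm_ring) si * hgsi + hgsi * si
  have ha : si ^ 2 * y = c * g := by
    linear_combination (norm := noncomm_ring) si * si * hy + hsi2z * g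
  have hb : y * si ^ 2 = c * g := by
    linear_combination (norm := noncomm_ring) hy * si * si - z * hgsi2 + hzsi2 * g
  have hc2 : si ^ 2 * h = h * si ^ 2 + 2 * si ^ 2 := by
    linear_combination (norm := noncomm_ring) si * hsih + hsih * si
  have K : X * si ^ 2 - si ^ 2 * X = 2 * (c * g) := by
    linear_combination (norm := noncomm_ring)
      hXalt * si * si - si * si * hXalt - y * hgsi2 + hb * g - h * hb - ha * g
        + hc2 * y + h * ha + 2 * ha
  linear_combination (norm := noncomm_ring) X * K + K * X - 2 * (hc X * g)
end

section
/- In the abstract dressing-operator setting, define E := (1/3)·(X³ + s⁻¹·X² + X·s⁻¹·X + X²·s⁻¹) and D := s⁻¹ + X. Then E·D − D·E = −c·(h·z·g² + z·g²·h), i.e. [E, D̃] = −(t/2u)·{H, Z/(1−Z)²}. (Since dD̃/du = (1/2u){H, Z/(1−Z)²} when Z = (t/2u)S², this is exactly the content of the differential equation dD̃/du + (1/t)[E, D̃] = 0 from the paper's dressing-operator lemma.) -/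
private lemma dce_comm_nest {R : Type*} [Ring R] {a b : R} (h : a*b = b*a) :
    ∀ x : R, a*(b*x) = b*(a*x) := fun x => by rw [← mul_assoc, h, mul_assoc]

private lemma dce_cancel_nest {R : Type*} [Ring R] {a b : R} (h : a*b = 1) :
    ∀ x : R, a*(b*x) = x := fun x => by rw [← mul_assoc, h, one_mul]

private lemma dce_push_nest {R : Type*} [Ring R] {a b c d : R} (h : a*b = b*c + d) :
    ∀ x : R, a*(b*x) = b*(c*x) + d*x := fun x => by
  rw [← mul_assoc, h, add_mul, mul_assoc]

private lemma dce_push_nest_sub {R : Type*} [Ring R] {a b c d : R} (h : a*b = b*c - d) :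
    ∀ x : R, a*(b*x) = b*(c*x) - d*x := fun x => by
  rw [← mul_assoc, h, sub_mul, mul_assoc]

private lemma dce_aux {R : Type*} [Ring R] (X si w v : R)
    (F1 : X*si = si*X + w) (F2 : X*w = w*X + v)
    (F3 : si*w = w*si) (F4 : si*v = v*si) :
    (si*X^2 + X*si*X + X^2*si)*si - si*(si*X^2 + X*si*X + X^2*si)
      = 6*(si*(X*w)) - 3*(si*v) + 3*(w*w) := by
  have F2' : w*X = X*w - v := by rw [F2]; abel
  have e2 : w*(si*X) = si*(X*w) - si*v := by
    calc w*(si*X) = (w*si)*X := by rw [mul_assoc]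
      _ = (si*w)*X := by rw [F3]
      _ = si*(w*X) := by rw [mul_assoc]
      _ = si*(X*w - v) := by rw [F2']
      _ = si*(X*w) - si*v := by rw [mul_sub]
  have e1 : (X*si)*(X*si) = si*X*(si*X) + si*X*w + w*(si*X) + w*w := by
    rw [F1]; noncomm_ring
  have e5 : si*X*(si*X) = si*(si*(X*X)) + si*(X*w) - si*v := by
    calc si*X*(si*X) = si*((X*si)*X) := by noncomm_ring
      _ = si*((si*X + w)*X) := by rw [F1]
      _ = si*(si*(X*X)) + si*(w*X) := by noncomm_ring
      _ = si*(si*(X*X)) + si*(X*w - v) := by rw [F2']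
      _ = si*(si*(X*X)) + (si*(X*w) - si*v) := by rw [mul_sub]
      _ = si*(si*(X*X)) + si*(X*w) - si*v := by abel
  have e4 : (X*w)*si = si*(X*w) + w*w := by
    calc (X*w)*si = (w*X + v)*si := by rw [F2]
      _ = w*(X*si) + v*si := by noncomm_ring
      _ = w*(si*X + w) + v*si := by rw [F1]
      _ = w*(si*X) + w*w + v*si := by noncomm_ring
      _ = (si*(X*w) - si*v) + w*w + si*v := by rw [e2, ← F4]
      _ = si*(X*w) + w*w := by abel
  have e3 : X*X*(si*si) = (X*si)*(X*si) + (X*w)*si := by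
    calc X*X*(si*si) = X*((X*si)*si) := by noncomm_ring
      _ = X*((si*X + w)*si) := by rw [F1]
      _ = (X*si)*(X*si) + (X*w)*si := by noncomm_ring
  have e0 : (si*X^2 + X*si*X + X^2*si)*si - si*(si*X^2 + X*si*X + X^2*si)
      = (X*si)*(X*si) + X*X*(si*si) - si*X*(si*X) - si*(si*(X*X)) := by noncomm_ring
  rw [e0, e3, e1, e5, e2, e4]
  noncomm_ring

/-- in the abstract dressing-operator setting, with
E := (1/3)(X³ + s⁻¹X² + Xs⁻¹X + X²s⁻¹) and D̃ := s⁻¹ + X, one has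
[E, D̃] = −c·(h·z·g² + z·g²·h), i.e. [E, D̃] = −(t/2u)·{H, Z/(1−Z)²}. -/
theorem dressing_comm_E_D (A : Type*) [Ring A] [Algebra ℚ A]
    (s si h c g z y X E D : A)
    (hs : s * si = 1) (hs' : si * s = 1)
    (hh : h * s - s * h = s)
    (hc : ∀ a : A, c * a = a * c)
    (hz : z = c * s ^ 2)
    (hg : (1 - z) * g = 1) (hg' : g * (1 - z) = 1)
    (hy : y = z * g)
    (hX : X = -((1 / 2 : ℚ) • (h * y + y * h)))
    (hE : E = (1 / 3 : ℚ) • (X ^ 3 + si * X ^ 2 + X * si * X + X ^ 2 * si))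
    (hD : D = si + X) :
    E * D - D * E = -(c * (h * (z * g ^ 2) + z * g ^ 2 * h)) := by
  -- basic commutation lemmas
  have Ecs : s*c = c*s := (hc s).symm
  have Ecsi : si*c = c*si := (hc si).symm
  have Ecg : g*c = c*g := (hc g).symm
  have Ech : h*c = c*h := (hc h).symm
  have Ehs : h*s = s*h + s := by linear_combination (norm := noncomm_ring) hh
  have Ehsi : h*si = si*h - si := by
    linear_combination (norm := noncomm_ring) (-(si*hh*si)) + (si*h)*hs - hs'*(h*si) - hs'*si
  have k1 : z*s = s*z := by
    rw [hz]; linear_combination (norm := noncomm_ring) (hc s) * s^2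
  have k2a : z*si = c*s := by
    rw [hz]; linear_combination (norm := noncomm_ring) (c*s)*hs
  have k2b : si*z = c*s := by
    rw [hz]; linear_combination (norm := noncomm_ring) (-(hc si)*s^2) + c*hs'*s
  have k2 : z*si = si*z := k2a.trans k2b.symm
  have Egs : g*s = s*g := by
    linear_combination (norm := noncomm_ring) (-((g*s)*hg)) + hg'*(s*g) + g*k1*g
  have Egsi : g*si = si*g := by
    linear_combination (norm := noncomm_ring) (-((g*si)*hg)) + hg'*(si*g) + g*k2*g
  have Ezg : z*g = g - 1 := by linear_combination (norm := noncomm_ring) -hg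
  have Egz : g*z = g - 1 := by linear_combination (norm := noncomm_ring) -hg'
  have Ehz : h*z = z*h + z + z := by
    rw [hz]; linear_combination (norm := noncomm_ring) (-(hc h)*s^2) + c*hh*s + (c*s)*hh
  have Ehg : h*g = g*h + (g*g + g*g - g - g) := by
    linear_combination (norm := noncomm_ring)
      (-(hg'*(h*g))) + g*Ehz*g - (g*h)*Ezg + Egz*g + Egz*g
  -- nested versions
  have Ecs' := dce_comm_nest Ecs
  have Ecsi' := dce_comm_nest Ecsi
  have Ecg' := dce_comm_nest Ecg
  have Ech' := dce_comm_nest Ech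
  have Egs' := dce_comm_nest Egs
  have Egsi' := dce_comm_nest Egsi
  have Ess' := dce_cancel_nest hs
  have Esis' := dce_cancel_nest hs'
  have Ehs' := dce_push_nest Ehs
  have Ehsi' := dce_push_nest_sub Ehsi
  have Ehg' := dce_push_nest Ehg
  -- scalar-free form of X
  have Hhy : h*(z*g) + (z*g)*h = ((z*g)*h + z*(g*g)) + ((z*g)*h + z*(g*g)) := by
    linear_combination (norm := noncomm_ring) Ehz*g + z*Ehg
  have hX' : X = -((z*g)*h + z*(g*g)) := by
    rw [hX, hy, Hhy, ← two_smul ℚ ((z*g)*h + z*(g*g)), smul_smul]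
    norm_num
  -- the commutator reduction
  have hMP : (X^3 + si*X^2 + X*si*X + X^2*si)*(si+X) - (si+X)*(X^3 + si*X^2 + X*si*X + X^2*si)
      = (si*X^2 + X*si*X + X^2*si)*si - si*(si*X^2 + X*si*X + X^2*si) := by noncomm_ring
  have hred : E*D - D*E
      = (1/3 : ℚ) • ((si*X^2 + X*si*X + X^2*si)*si - si*(si*X^2 + X*si*X + X^2*si)) := by
    rw [hE, hD, smul_mul_assoc, mul_smul_comm, ← smul_sub, hMP]
  have F1 : X*si = si*X + si*(z*g) := by
    rw [hX', hz]
    simp only [Ecs, Ecsi, Ecg, Ech, Ecs', Ecsi', Ecg', Ech', Egs, Egsi, Egs', Egsi',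
      hs, hs', Ess', Esis', Ehs, Ehsi, Ehg, Ehs', Ehsi', Ehg',
      mul_add, add_mul, mul_sub, sub_mul, neg_mul, mul_neg, mul_one, one_mul,
      mul_assoc, pow_two]
    noncomm_ring
  have F2 : X*(si*(z*g)) = (si*(z*g))*X + (X*(si*(z*g)) - (si*(z*g))*X) := by noncomm_ring
  have F3 : si*(si*(z*g)) = (si*(z*g))*si := by
    rw [hz]
    simp only [Ecs, Ecsi, Ecg, Ech, Ecs', Ecsi', Ecg', Ech', Egs, Egsi, Egs', Egsi',
      hs, hs', Ess', Esis', Ehs, Ehsi, Ehg, Ehs', Ehsi', Ehg',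
      mul_add, add_mul, mul_sub, sub_mul, neg_mul, mul_neg, mul_one, one_mul,
      mul_assoc, pow_two]
  have F4 : si*(X*(si*(z*g)) - (si*(z*g))*X) = (X*(si*(z*g)) - (si*(z*g))*X)*si := by
    rw [hX', hz]
    simp only [Ecs, Ecsi, Ecg, Ech, Ecs', Ecsi', Ecg', Ech', Egs, Egsi, Egs', Egsi',
      hs, hs', Ess', Esis', Ehs, Ehsi, Ehg, Ehs', Ehsi', Ehg',
      mul_add, add_mul, mul_sub, sub_mul, neg_mul, mul_neg, mul_one, one_mul,
      mul_assoc, pow_two]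
    noncomm_ring
  have key := dce_aux X si (si*(z*g)) (X*(si*(z*g)) - (si*(z*g))*X) F1 F2 F3 F4
  have hP : (si*X^2 + X*si*X + X^2*si)*si - si*(si*X^2 + X*si*X + X^2*si)
      = -(c * (h * (z * g ^ 2) + z * g ^ 2 * h)) + -(c * (h * (z * g ^ 2) + z * g ^ 2 * h))
        + -(c * (h * (z * g ^ 2) + z * g ^ 2 * h)) := by
    rw [key, hX', hz]
    simp only [Ecs, Ecsi, Ecg, Ech, Ecs', Ecsi', Ecg', Ech', Egs, Egsi, Egs', Egsi',
      hs, hs', Ess', Esis', Ehs, Ehsi, Ehg, Ehs', Ehsi', Ehg',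
      mul_add, add_mul, mul_sub, sub_mul, neg_mul, mul_neg, mul_one, one_mul,
      mul_assoc, pow_two]
    noncomm_ring
  rw [hred, hP]
  have h3 : ((1:ℚ)+1+1) • (-(c * (h * (z * g ^ 2) + z * g ^ 2 * h)))
      = -(c * (h * (z * g ^ 2) + z * g ^ 2 * h)) + -(c * (h * (z * g ^ 2) + z * g ^ 2 * h))
        + -(c * (h * (z * g ^ 2) + z * g ^ 2 * h)) := by
    rw [add_smul, add_smul, one_smul]
  rw [← h3, smul_smul]
  norm_num
end

section
/- In A⟦u⟧, the commutator of O := s·Φ with h is given by O·h − h·O = (2u·s⁻¹ − s)·Φ. (This is the identity [Õ, H] = 2u·S⁻¹·(1−Z)·e^{u/S²} from the proof of the dressing theorem, using [h, s^m] = m·s^m and 2u·S⁻¹·(1−Z) = 2u·s⁻¹ − s for Z = s²/(2u).) -/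
open PowerSeries

/-- with Φ = e^{u/s²} = Σ_{n≥0} (u^n/n!)·s^{−2n} and O = s·Φ in A⟦u⟧,
one has [O, h] = (2u·s⁻¹ − s)·Φ, i.e. O·h − h·O = (2u·si − s)·Φ. -/
theorem comm_O_h (A : Type*) [Ring A] [Algebra ℚ A]
    (s si h : A)
    (hs : s * si = 1) (hs' : si * s = 1)
    (hh : h * s - s * h = s)
    (Φ O : PowerSeries A)
    (hΦ : Φ = PowerSeries.mk fun n => ((1 : ℚ) / n.factorial) • si ^ (2 * n))
    (hO : O = PowerSeries.C s * Φ) :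
    O * PowerSeries.C h - PowerSeries.C h * O
      = (2 * PowerSeries.X * PowerSeries.C si - PowerSeries.C s) * Φ := by
  have h1 : h * s = s * h + s := by
    have := sub_eq_iff_eq_add.mp hh; rw [this]; abel
  have hsi : h * si = si * h - si := by
    have e : si * h = h * si + si := by
      calc si * h = si * h * (s * si) := by rw [hs, mul_one]
        _ = si * (h * s) * si := by noncomm_ring
        _ = si * (s * h + s) * si := by rw [h1]
        _ = si * s * h * si + si * s * si := by noncomm_ring
        _ = h * si + si := by rw [hs', one_mul, one_mul]
    rw [e]; abel
  have hpow : ∀ m : ℕ, h * si ^ m = si ^ m * h - m • si ^ m := by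
    intro m
    induction m with
    | zero => simp
    | succ m ih =>
      calc h * si ^ (m+1) = (h * si) * si ^ m := by rw [pow_succ']; noncomm_ring
        _ = (si * h - si) * si ^ m := by rw [hsi]
        _ = si * (h * si ^ m) - si ^ (m+1) := by rw [pow_succ']; noncomm_ring
        _ = si * (si ^ m * h - m • si ^ m) - si ^ (m+1) := by rw [ih]
        _ = si ^ (m+1) * h - (m+1) • si ^ (m+1) := by
            rw [pow_succ', succ_nsmul, mul_sub, mul_smul_comm, ← mul_assoc]
            abel
  have hr : (2 * X * C si - C s) * Φ = 2 * (X * (C si * Φ)) - C s * Φ := by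
    noncomm_ring
  rw [hO, hr, hΦ]
  ext n
  rcases n with _ | n
  · simp [two_mul]
    have e : s * h - h * s = -(h * s - s * h) := by abel
    rw [e, hh]
  · simp only [map_sub, coeff_C_mul, coeff_mul_C, coeff_mk, two_mul, map_add,
      coeff_succ_X_mul]
    have hx : s * si ^ (n + 1 + (n + 1)) = si ^ (n + n + 1) := by
      have e : si ^ (n + 1 + (n + 1)) = si * si ^ (n + n + 1) := by
        rw [← pow_succ']; ring_nf
      rw [e, ← mul_assoc, hs, one_mul]
    have hy : si * si ^ (n + n) = si ^ (n + n + 1) := (pow_succ' si (n + n)).symm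
    have hmain : s * si ^ (n + 1 + (n + 1)) * h - h * (s * si ^ (n + 1 + (n + 1)))
        = (n + 1 + (n + 1)) • si ^ (n + n + 1) - si ^ (n + n + 1) := by
      have e1 : h * (s * si ^ (n + 1 + (n + 1)))
          = s * (h * si ^ (n + 1 + (n + 1))) + s * si ^ (n + 1 + (n + 1)) := by
        rw [← mul_assoc, h1, add_mul, mul_assoc]
      rw [e1, hpow, mul_sub, ← mul_assoc, mul_smul_comm, hx]
      abel
    simp only [mul_smul_comm, smul_mul_assoc, ← smul_sub]
    rw [hmain, hx, hy]
    rw [smul_sub, ← Nat.cast_smul_eq_nsmul ℚ, smul_smul]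
    rw [show ∀ a b c : A, a - c = b + b - c ↔ a = b + b from fun a b c => sub_left_inj]
    rw [← add_smul]
    congr 1
    have hfac : ((n + 1).factorial : ℚ) = (n + 1) * n.factorial := by
      rw [Nat.factorial_succ]; push_cast; ring
    have h0 : (n.factorial : ℚ) ≠ 0 := Nat.cast_ne_zero.mpr n.factorial_ne_zero
    have h0' : ((n + 1).factorial : ℚ) ≠ 0 := Nat.cast_ne_zero.mpr (n + 1).factorial_ne_zero
    field_simp [hfac]
    push_cast [Nat.add_comm 1 n, Nat.factorial_succ]
    ring
end

section
/- In A⟦u⟧, the commutator of O := s·Φ with X is given by O·X − X·O = −s·Φ. (This is the identity [Õ, X] = −S·e^{u/S²} from the proof of the dressing theorem, obtained from [Õ, X] = −(1/2){[Õ, H], Z/(1−Z)} since Õ commutes with all expressions in s.) -/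
open PowerSeries



section commOXaux
set_option linter.unusedSectionVars false

variable {A : Type*} [Ring A] [Algebra ℚ A]

lemma commOX_coeffq (q : ℚ) (φ : PowerSeries A) (n : ℕ) :
    (PowerSeries.coeff n) (q • φ) = q • (PowerSeries.coeff n φ) := rfl

lemma commOX_spow (s si : A) (hs : s * si = 1) (hs' : si * s = 1) (m : ℕ) :
    si ^ m * s = s * si ^ m :=
  ((show Commute s si by unfold Commute SemiconjBy; rw [hs, hs']).pow_right m).symm

lemma commOX_hsipow (s si h : A) (hs : s * si = 1) (hs' : si * s = 1)
    (hh : h * s - s * h = s) (m : ℕ) :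
    h * si ^ m = si ^ m * h - (m : ℚ) • si ^ m := by
  have e1 : h * s = s + s * h := eq_add_of_sub_eq hh
  have base : h * si = si * h - si := by
    have e2 : si * (h * s) * si = si * (s + s * h) * si := by rw [e1]
    have e3 : si * (h * s) * si = si * h := by
      rw [← mul_assoc si h s, mul_assoc (si * h), hs, mul_one]
    have e4 : si * (s + s * h) * si = si + h * si := by
      rw [mul_add, hs', ← mul_assoc si s h, hs', one_mul, add_mul, one_mul]
    rw [e3, e4] at e2
    rw [e2]; abel
  induction m with
  | zero => simp
  | succ m ih =>
    have e5 : h * si ^ (m+1) = (h * si ^ m) * si := by rw [mul_assoc, ← pow_succ]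
    rw [e5, ih, sub_mul, smul_mul_assoc, ← pow_succ, mul_assoc, base, mul_sub,
      ← mul_assoc, ← pow_succ]
    push_cast
    module

lemma commOX_aux1 (s si h : A) (a b : ℕ) :
    (s * si ^ a) * (si ^ b * h) = s * si ^ (a+b) * h := by
  rw [mul_assoc s, ← mul_assoc (si ^ a), ← pow_add, ← mul_assoc]

lemma commOX_aux1' (s si : A) (a b : ℕ) : (s * si ^ a) * si ^ b = s * si ^ (a+b) := by
  rw [mul_assoc, ← pow_add]

lemma commOX_aux2 (s si : A) (hs : s * si = 1) (hs' : si * s = 1) (a b : ℕ) :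
    si ^ a * (s * si ^ b) = s * si ^ (a+b) := by
  rw [← mul_assoc, commOX_spow s si hs hs', mul_assoc, ← pow_add]

lemma commOX_aux3 (s si h : A) (hs : s * si = 1) (hs' : si * s = 1)
    (hh : h * s - s * h = s) (a b : ℕ) :
    (si ^ a * h) * (s * si ^ b) = s * si ^ (a+b) * h + (1 - (b:ℚ)) • (s * si ^ (a+b)) := by
  have e1 : h * s = s + s * h := eq_add_of_sub_eq hh
  have step1 : (si ^ a * h) * (s * si ^ b) = si ^ a * (h * s) * si ^ b := by
    rw [mul_assoc (si ^ a) h, ← mul_assoc h s, ← mul_assoc]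
  rw [step1, e1, mul_add, add_mul, ← mul_assoc (si ^ a) s h,
    commOX_spow s si hs hs' a]
  rw [mul_assoc (s * si ^ a) h, commOX_hsipow s si h hs hs' hh b,
    mul_sub, mul_smul_comm, commOX_aux1 s si h a b, commOX_aux1' s si a b]
  module

lemma commOX_qL1 (n : ℕ) :
    ∑ k ∈ Finset.range (n+1), (2:ℚ)^(n-k)/(k.factorial)
      = ∑ k ∈ Finset.range (n+1), (2:ℚ)^k/((n-k).factorial) := by
  rw [← Finset.sum_range_reflect]
  apply Finset.sum_congr rfl
  intro k hk
  have hk' : k ≤ n := by simpa [Nat.lt_succ_iff] using hk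
  rw [show n+1-1-k = n-k from rfl, show n-(n-k) = k by omega]

lemma commOX_qL2 (n : ℕ) :
    ∑ k ∈ Finset.range (n+1), ((2*(k:ℚ)-1) * 2^(n-k)/(k.factorial))
      = -1/(n.factorial) := by
  induction n with
  | zero => simp
  | succ n ih =>
    rw [Finset.sum_range_succ]
    have h1 : ∑ k ∈ Finset.range (n+1), ((2*(k:ℚ)-1) * 2^(n+1-k)/(k.factorial))
        = ∑ k ∈ Finset.range (n+1), 2*((2*(k:ℚ)-1) * 2^(n-k)/(k.factorial)) := by
      apply Finset.sum_congr rfl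
      intro k hk
      have hk' : k ≤ n := by simpa [Nat.lt_succ_iff] using hk
      rw [show n+1-k = (n-k)+1 by omega, pow_succ]
      ring
    rw [h1, ← Finset.mul_sum, ih]
    have h2 : ((n+1 : ℕ).factorial : ℚ) = (n+1) * n.factorial := by
      push_cast [Nat.factorial_succ]; ring
    have h3 : (n.factorial : ℚ) ≠ 0 := by positivity
    have h4 : ((n:ℚ)+1) ≠ 0 := by positivity
    field_simp [h2]
    simp only [Nat.sub_self, pow_zero, add_comm 1 n, h2, Nat.cast_add, Nat.cast_one]
    ring

lemma commOX_qL3 (n : ℕ) :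
    (∑ k ∈ Finset.range (n+1), -(((n-k : ℕ):ℚ) * 2^(n-k) / k.factorial))
      - (∑ k ∈ Finset.range (n+1), (2:ℚ)^k * (1 - 2*((n-k:ℕ):ℚ) - k) / (n-k).factorial)
    = -1/(n.factorial) := by
  have hrefl : (∑ k ∈ Finset.range (n+1), (2:ℚ)^k * (1 - 2*((n-k:ℕ):ℚ) - k) / (n-k).factorial)
      = ∑ k ∈ Finset.range (n+1), (2:ℚ)^(n-k) * (1 - 2*(k:ℚ) - ((n-k:ℕ):ℚ)) / k.factorial := by
    rw [← Finset.sum_range_reflect]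
    apply Finset.sum_congr rfl
    intro k hk
    have hk' : k ≤ n := by simpa [Nat.lt_succ_iff] using hk
    rw [show n+1-1-k = n-k from rfl, show n-(n-k) = k by omega]
  rw [hrefl, ← Finset.sum_sub_distrib, ← commOX_qL2 n]
  apply Finset.sum_congr rfl
  intro k hk
  have hk' : k ≤ n := by simpa [Nat.lt_succ_iff] using hk
  have hc : ((n-k : ℕ):ℚ) = (n:ℚ) - k := by
    push_cast [Nat.cast_sub hk']; ring
  rw [hc]; ring

end commOXaux

/-- with Φ = e^{u/s²}, O = s·Φ, Y = −1 − Σ_{n≥1} (2u)^n·s^{−2n}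
(the expansion of Z/(1−Z) for Z = s²/(2u)) and X = −(1/2)(h·Y + Y·h) in A⟦u⟧,
one has [O, X] = −s·Φ, i.e. O·X − X·O = −(s·Φ). -/
theorem comm_O_X (A : Type*) [Ring A] [Algebra ℚ A]
    (s si h : A)
    (hs : s * si = 1) (hs' : si * s = 1)
    (hh : h * s - s * h = s)
    (Φ O Y X : PowerSeries A)
    (hΦ : Φ = PowerSeries.mk fun n => ((1 : ℚ) / n.factorial) • si ^ (2 * n))
    (hO : O = PowerSeries.C s * Φ)
    (hY : Y = PowerSeries.mk fun n =>
      if n = 0 then -1 else -(((2 : ℚ) ^ n) • si ^ (2 * n)))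
    (hX : X = -((1 / 2 : ℚ) • (PowerSeries.C h * Y + Y * PowerSeries.C h))) :
    O * X - X * O = -(PowerSeries.C s * Φ) := by
  -- normalize Y
  have hY' : Y = PowerSeries.mk fun n => -(((2:ℚ)^n) • si^(2*n)) := by
    rw [hY]
    apply PowerSeries.ext
    intro n
    rw [PowerSeries.coeff_mk, PowerSeries.coeff_mk]
    split_ifs with h0
    · subst h0; simp
    · rfl
  -- normalize X
  have hX' : X = PowerSeries.mk fun n =>
      ((2:ℚ)^n) • (si^(2*n) * h) - ((n:ℚ) * 2^n) • si^(2*n) := by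
    rw [hX, hY']
    apply PowerSeries.ext
    intro n
    rw [map_neg, commOX_coeffq, map_add, PowerSeries.coeff_C_mul,
      PowerSeries.coeff_mul_C, PowerSeries.coeff_mk, PowerSeries.coeff_mk]
    rw [mul_neg, neg_mul, mul_smul_comm, smul_mul_assoc,
      commOX_hsipow s si h hs hs' hh (2*n)]
    push_cast
    module
  -- normalize O
  have hO' : O = PowerSeries.mk fun n => ((1:ℚ)/n.factorial) • (s * si^(2*n)) := by
    rw [hO, hΦ]
    apply PowerSeries.ext
    intro n
    rw [PowerSeries.coeff_C_mul, PowerSeries.coeff_mk, PowerSeries.coeff_mk,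
      mul_smul_comm]
  -- main computation
  rw [hO', hX', hΦ]
  apply PowerSeries.ext
  intro n
  rw [map_sub, map_neg, PowerSeries.coeff_mul, PowerSeries.coeff_mul,
    Finset.Nat.sum_antidiagonal_eq_sum_range_succ_mk,
    Finset.Nat.sum_antidiagonal_eq_sum_range_succ_mk,
    PowerSeries.coeff_C_mul, PowerSeries.coeff_mk]
  simp only [PowerSeries.coeff_mk]
  have hsum1 : ∑ k ∈ Finset.range (n+1),
      (((1:ℚ)/k.factorial) • (s * si^(2*k))) *
        (((2:ℚ)^(n-k)) • (si^(2*(n-k)) * h) - (((n-k:ℕ):ℚ) * 2^(n-k)) • si^(2*(n-k)))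
      = ∑ k ∈ Finset.range (n+1),
        (((2:ℚ)^(n-k)/k.factorial) • (s * si^(2*n) * h)
          + (-(((n-k:ℕ):ℚ) * 2^(n-k) / k.factorial)) • (s * si^(2*n))) := by
    apply Finset.sum_congr rfl
    intro k hk
    have hk' : k ≤ n := by simpa [Nat.lt_succ_iff] using hk
    have hexp : 2*k + 2*(n-k) = 2*n := by omega
    rw [mul_sub, smul_mul_smul_comm, smul_mul_smul_comm,
      commOX_aux1 s si h (2*k) (2*(n-k)), commOX_aux1' s si (2*k) (2*(n-k)), hexp]
    module
  have hsum2 : ∑ k ∈ Finset.range (n+1),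
      (((2:ℚ)^k) • (si^(2*k) * h) - (((k:ℕ):ℚ) * 2^k) • si^(2*k)) *
        (((1:ℚ)/(n-k).factorial) • (s * si^(2*(n-k))))
      = ∑ k ∈ Finset.range (n+1),
        (((2:ℚ)^k/(n-k).factorial) • (s * si^(2*n) * h)
          + ((2:ℚ)^k * (1 - 2*((n-k:ℕ):ℚ) - k) / (n-k).factorial) • (s * si^(2*n))) := by
    apply Finset.sum_congr rfl
    intro k hk
    have hk' : k ≤ n := by simpa [Nat.lt_succ_iff] using hk
    have hexp : 2*k + 2*(n-k) = 2*n := by omega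
    rw [sub_mul, smul_mul_smul_comm, smul_mul_smul_comm,
      commOX_aux3 s si h hs hs' hh (2*k) (2*(n-k)),
      commOX_aux2 s si hs hs' (2*k) (2*(n-k)), hexp]
    push_cast
    module
  rw [hsum1, hsum2, Finset.sum_add_distrib, Finset.sum_add_distrib,
    ← Finset.sum_smul, ← Finset.sum_smul, ← Finset.sum_smul, ← Finset.sum_smul,
    commOX_qL1 n]
  have hq3 := commOX_qL3 n
  have hfinal :
      (∑ k ∈ Finset.range (n+1), (2:ℚ)^k/((n-k).factorial)) • (s * si^(2*n) * h)
        + (∑ k ∈ Finset.range (n+1), -(((n-k:ℕ):ℚ) * 2^(n-k) / k.factorial)) • (s * si^(2*n))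
      - ((∑ k ∈ Finset.range (n+1), (2:ℚ)^k/((n-k).factorial)) • (s * si^(2*n) * h)
        + (∑ k ∈ Finset.range (n+1), (2:ℚ)^k * (1 - 2*((n-k:ℕ):ℚ) - k) / (n-k).factorial) • (s * si^(2*n)))
      = ((∑ k ∈ Finset.range (n+1), -(((n-k:ℕ):ℚ) * 2^(n-k) / k.factorial))
          - (∑ k ∈ Finset.range (n+1), (2:ℚ)^k * (1 - 2*((n-k:ℕ):ℚ) - k) / (n-k).factorial))
          • (s * si^(2*n)) := by
    module
  rw [hfinal, hq3, mul_smul_comm]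
  module
end

section
/- Verification of the ODE satisfied by the dressed operator: in A⟦u⟧, set E := (1/3)·(X³ + s⁻¹·X² + X·s⁻¹·X + X²·s⁻¹) and D := s⁻¹ + X. Then O·(E − (1/3)D³) − (E − (1/3)D³)·O = s⁻¹·Φ, and moreover s⁻¹·Φ equals the u-derivative of O; that is, O satisfies dO/du = [O, E − (1/3)D̃³], which is the key computation in the proof that the dressing operator conjugates the operator 𝓑 into its leading part 𝓑̃. -/
open PowerSeries

set_option linter.unusedSectionVars false

section Aux
variable {A : Type*} [Ring A] [Algebra ℚ A]

lemma psAux_C_comm_mk (a : A) (f : ℕ → A) (hc : ∀ n, a * f n = f n * a) :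
    PowerSeries.C a * PowerSeries.mk f = PowerSeries.mk f * PowerSeries.C a := by
  ext n
  rw [coeff_C_mul, coeff_mul_C, coeff_mk, hc]

lemma psAux_mk_comm_mk (f g : ℕ → A) (hc : ∀ i j, f i * g j = g j * f i) :
    (PowerSeries.mk f) * PowerSeries.mk g = PowerSeries.mk g * PowerSeries.mk f := by
  ext n
  rw [coeff_mul, coeff_mul, Finset.Nat.sum_antidiagonal_eq_sum_range_succ_mk,
    Finset.Nat.sum_antidiagonal_eq_sum_range_succ_mk]
  simp only [coeff_mk]
  conv_rhs => rw [← Finset.sum_range_reflect]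
  refine Finset.sum_congr rfl fun k hk => ?_
  rw [Finset.mem_range, Nat.lt_succ_iff] at hk
  have h1 : n + 1 - 1 - k = n - k := by omega
  have h2 : n - (n - k) = k := by omega
  rw [h1, h2, hc]

lemma psAux_smul_mul_comm (p q : ℚ) (x y : A) (hxy : x * y = y * x) :
    (p • x) * (q • y) = (q • y) * (p • x) := by
  rw [smul_mul_assoc, smul_mul_assoc, mul_smul_comm, mul_smul_comm, hxy, smul_comm]

lemma psAux_smul_mul_smul (p q : ℚ) (x y : A) :
    (p • x) * (q • y) = (p * q) • (x * y) := by
  rw [smul_mul_assoc, mul_smul_comm, smul_smul]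

lemma psAux_key_sum (n : ℕ) :
    ∑ k ∈ Finset.range (n + 1), (1 - 2 * (k : ℚ)) * 2 ^ (n - k) / k.factorial
      = 1 / n.factorial := by
  induction n with
  | zero => simp
  | succ n ih =>
    rw [Finset.sum_range_succ]
    have h1 : ∑ k ∈ Finset.range (n + 1), (1 - 2 * (k : ℚ)) * 2 ^ (n + 1 - k) / k.factorial
        = 2 * ∑ k ∈ Finset.range (n + 1), (1 - 2 * (k : ℚ)) * 2 ^ (n - k) / k.factorial := by
      rw [Finset.mul_sum]
      refine Finset.sum_congr rfl fun k hk => ?_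
      rw [Finset.mem_range, Nat.lt_succ_iff] at hk
      have : n + 1 - k = (n - k) + 1 := by omega
      rw [this, pow_succ]
      ring
    rw [h1, ih, Nat.sub_self, pow_zero]
    have hnf : (n.factorial : ℚ) ≠ 0 := Nat.cast_ne_zero.mpr n.factorial_ne_zero
    have hn1 : ((n : ℚ) + 1) ≠ 0 := by positivity
    have hfs : ((n + 1).factorial : ℚ) = ((n : ℚ) + 1) * n.factorial := by
      rw [Nat.factorial_succ]; push_cast; ring
    rw [hfs]
    push_cast
    field_simp
    ring

lemma psAux_bracket {R : Type*} [Ring R] (o a x : R) (ha : a * o = o * a)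
    (hx : o * x - x * o = -o) :
    o * (a ^ 3 + a ^ 2 * x + a * x * a + x * a ^ 2)
      - (a ^ 3 + a ^ 2 * x + a * x * a + x * a ^ 2) * o
      = -(a ^ 2 * o) - a ^ 2 * o - a ^ 2 * o := by
  have ha' : o * a = a * o := ha.symm
  have ha2 : ∀ z : R, o * (a * z) = a * (o * z) := fun z => by
    rw [← mul_assoc, ha', mul_assoc]
  have hx'' : o * x = x * o - o := by
    rw [sub_eq_iff_eq_add] at hx
    rw [hx]; abel
  have hx2 : ∀ z : R, o * (x * z) = x * (o * z) - o * z := fun z => by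
    rw [← mul_assoc, hx'', sub_mul, mul_assoc]
  simp only [pow_succ, pow_zero, one_mul, mul_add, add_mul, mul_assoc, ha2, hx2, hx'', ha',
    sub_mul, mul_sub]
  abel

end Aux

noncomputable def psDeriv {A : Type*} [Ring A] (F : PowerSeries A) : PowerSeries A :=
  PowerSeries.mk fun n => (n + 1 : ℕ) • PowerSeries.coeff (n + 1) F

/-- with Φ = e^{u/s²}, O = s·Φ, Y the expansion of Z/(1−Z),
X = −(1/2)(h·Y + Y·h), E = (1/3)(X³ + s⁻¹X² + Xs⁻¹X + X²s⁻¹) and D̃ = s⁻¹ + X in A⟦u⟧,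
one has [O, E − (1/3)D̃³] = s⁻¹·Φ, and s⁻¹·Φ equals the u-derivative of O; that is,
O satisfies the ODE dO/du = [O, E − (1/3)D̃³]. -/
theorem dressed_operator_ODE (A : Type*) [Ring A] [Algebra ℚ A]
    (s si h : A)
    (hs : s * si = 1) (hs' : si * s = 1)
    (hh : h * s - s * h = s)
    (Φ O Y X E D : PowerSeries A)
    (hΦ : Φ = PowerSeries.mk fun n => ((1 : ℚ) / n.factorial) • si ^ (2 * n))
    (hO : O = PowerSeries.C s * Φ)
    (hY : Y = PowerSeries.mk fun n =>
      if n = 0 then -1 else -(((2 : ℚ) ^ n) • si ^ (2 * n)))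
    (hX : X = -((1 / 2 : ℚ) • (PowerSeries.C h * Y + Y * PowerSeries.C h)))
    (hE : E = (1 / 3 : ℚ) • (X ^ 3 + PowerSeries.C si * X ^ 2
      + X * PowerSeries.C si * X + X ^ 2 * PowerSeries.C si))
    (hD : D = PowerSeries.C si + X) :
    O * (E - (1 / 3 : ℚ) • D ^ 3) - (E - (1 / 3 : ℚ) • D ^ 3) * O
        = PowerSeries.C si * Φ ∧
      psDeriv O = PowerSeries.C si * Φ := by
  -- element-level facts
  have hcomm : s * si = si * s := by rw [hs, hs']
  have hsipow : ∀ k : ℕ, s * si ^ k = si ^ k * s := fun k =>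
    ((show Commute s si from hcomm).pow_right k).eq
  have hpowpow : ∀ a b : ℕ, si ^ a * si ^ b = si ^ b * si ^ a := fun a b => by
    rw [← pow_add, ← pow_add, Nat.add_comm]
  have hmix : ∀ a b : ℕ, (s * si ^ a) * si ^ b = si ^ b * (s * si ^ a) := fun a b => by
    rw [mul_assoc, ← pow_add, ← mul_assoc, ← hsipow, mul_assoc, ← pow_add, Nat.add_comm]
  have he1 : h * s = s * h + s := by rw [sub_eq_iff_eq_add] at hh; rw [hh]; abel
  have hhsi : h * si = si * h - si := by
    have l1 : si * (h * s) * si = si * h := by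
      rw [← mul_assoc, mul_assoc (si * h) s si, hs, mul_one]
    have l2 : si * (s * h + s) * si = h * si + si := by
      rw [mul_add, ← mul_assoc, hs', one_mul, add_mul, one_mul]
    have := l1.symm.trans (by rw [he1, l2])
    -- this : si * h = h * si + si
    rw [this]; abel
  have hhpow : ∀ k : ℕ, h * si ^ k = si ^ k * h - ((k : ℚ)) • si ^ k := by
    intro k
    induction k with
    | zero => simp
    | succ k ih =>
      rw [pow_succ, ← mul_assoc, ih, sub_mul, smul_mul_assoc, mul_assoc, hhsi, mul_sub,
        ← mul_assoc, ← pow_succ]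
      push_cast
      module
  -- coefficient form of O
  have hOmk : O = PowerSeries.mk fun n => ((1 : ℚ) / n.factorial) • (s * si ^ (2 * n)) := by
    rw [hO, hΦ]
    ext n
    rw [coeff_C_mul, coeff_mk, coeff_mk, mul_smul_comm]
  -- uniform form of Y
  have hYmk : Y = PowerSeries.mk fun n => (-(2 : ℚ) ^ n) • si ^ (2 * n) := by
    rw [hY]
    ext n
    rw [coeff_mk, coeff_mk]
    by_cases hn : n = 0
    · subst hn; simp
    · rw [if_neg hn, neg_smul]
  set Csi := PowerSeries.C si with hCsi
  set Ch := PowerSeries.C h with hCh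
  -- T : the commutator [O, C h]
  set T : PowerSeries A :=
    PowerSeries.mk fun n => ((2 * (n : ℚ) - 1) / n.factorial) • (s * si ^ (2 * n)) with hT
  -- commutation lemmas
  have hsiO : Csi * O = O * Csi := by
    rw [hOmk]
    refine psAux_C_comm_mk _ _ fun n => ?_
    rw [mul_smul_comm, smul_mul_assoc]
    congr 1
    calc si * (s * si ^ (2 * n)) = (si * s) * si ^ (2 * n) := by rw [mul_assoc]
      _ = si ^ (2 * n) := by rw [hs', one_mul]
      _ = s * (si * si ^ (2 * n)) := by rw [← mul_assoc, hs, one_mul]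
      _ = s * si ^ (2 * n) * si := by
          rw [← pow_succ', mul_assoc, ← pow_succ]
  have hOY : O * Y = Y * O := by
    rw [hOmk, hYmk]
    exact psAux_mk_comm_mk _ _ fun i j => psAux_smul_mul_comm _ _ _ _ (hmix _ _)
  have hTY' : T * Y = Y * T := by
    rw [hYmk]
    exact psAux_mk_comm_mk _ _ fun i j => psAux_smul_mul_comm _ _ _ _ (hmix _ _)
  -- [O, C h] = T
  have hOCh : O * Ch - Ch * O = T := by
    rw [hOmk]
    ext n
    rw [map_sub, coeff_mul_C, coeff_C_mul, coeff_mk, coeff_mk]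
    have hhs : h * (s * si ^ (2 * n)) = (s * si ^ (2 * n)) * h
        - ((2 * n : ℚ)) • (s * si ^ (2 * n)) + s * si ^ (2 * n) := by
      rw [← mul_assoc, he1, add_mul, mul_assoc, hhpow, mul_sub, mul_smul_comm, ← mul_assoc]
      push_cast
      module
    rw [smul_mul_assoc, mul_smul_comm, hhs]
    module
  have hOCh' : O * Ch = Ch * O + T := by rw [← hOCh]; abel
  -- T * Y = O
  have hTYO : T * Y = O := by
    rw [hT, hYmk, hOmk]
    ext n
    rw [coeff_mul, Finset.Nat.sum_antidiagonal_eq_sum_range_succ_mk]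
    simp only [coeff_mk]
    calc ∑ k ∈ Finset.range (n + 1),
          (((2 * (k : ℚ) - 1) / k.factorial) • (s * si ^ (2 * k))) *
            ((-(2 : ℚ) ^ (n - k)) • si ^ (2 * (n - k)))
        = ∑ k ∈ Finset.range (n + 1),
            ((1 - 2 * (k : ℚ)) * 2 ^ (n - k) / k.factorial) • (s * si ^ (2 * n)) := by
          refine Finset.sum_congr rfl fun k hk => ?_
          rw [Finset.mem_range, Nat.lt_succ_iff] at hk
          rw [psAux_smul_mul_smul, mul_assoc, ← pow_add]
          have he : 2 * k + 2 * (n - k) = 2 * n := by omega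
          rw [he]
          congr 1
          ring
      _ = ((1 : ℚ) / n.factorial) • (s * si ^ (2 * n)) := by
          rw [← Finset.sum_smul, psAux_key_sum]
  -- [O, X] = -O
  have hOX : O * X - X * O = -O := by
    have h1 : O * (Ch * Y) = Ch * Y * O + O := by
      rw [← mul_assoc, hOCh', add_mul, mul_assoc, hOY, ← mul_assoc, hTYO]
    have h2 : O * (Y * Ch) = Y * Ch * O + O := by
      rw [← mul_assoc, hOY, mul_assoc, hOCh', mul_add, ← mul_assoc, ← hTY', hTYO]
    have key : O * (Ch * Y + Y * Ch) - (Ch * Y + Y * Ch) * O = O + O := by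
      rw [mul_add, add_mul, h1, h2]; abel
    rw [hX, mul_neg, neg_mul, sub_neg_eq_add, neg_add_eq_sub, smul_mul_assoc, mul_smul_comm,
      ← smul_sub]
    have : (Ch * Y + Y * Ch) * O - O * (Ch * Y + Y * Ch) = -(O + O) := by
      rw [← neg_sub, key]
    rw [this]
    module
  -- simplify E - (1/3) D^3
  have hB : E - (1 / 3 : ℚ) • D ^ 3
      = (1 / 3 : ℚ) • (-(Csi ^ 3 + Csi ^ 2 * X + Csi * X * Csi + X * Csi ^ 2)) := by
    rw [hE, hD, ← smul_sub]
    congr 1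
    noncomm_ring
  constructor
  · rw [hB, mul_smul_comm, smul_mul_assoc, ← smul_sub, mul_neg, neg_mul, neg_sub_neg,
      ← neg_sub, psAux_bracket O Csi X hsiO hOX]
    have hfin : Csi ^ 2 * O = Csi * Φ := by
      rw [sq, hO, mul_assoc, ← mul_assoc Csi (PowerSeries.C s) Φ, hCsi, ← map_mul, hs',
        map_one, one_mul]
    rw [hfin]
    module
  · rw [hOmk, hΦ]
    ext n
    rw [psDeriv, coeff_mk, coeff_mk, hCsi, coeff_C_mul, coeff_mk]
    have hz : s * si ^ (2 * (n + 1)) = si ^ (2 * n + 1) := by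
      have : 2 * (n + 1) = 1 + (2 * n + 1) := by omega
      rw [this, pow_add, pow_one, ← mul_assoc, hs, one_mul]
    rw [hz, mul_smul_comm, ← pow_succ']
    rw [← Nat.cast_smul_eq_nsmul ℚ, smul_smul]
    congr 1
    have hnf : (n.factorial : ℚ) ≠ 0 := Nat.cast_ne_zero.mpr n.factorial_ne_zero
    have hn1 : ((n : ℚ) + 1) ≠ 0 := by positivity
    rw [Nat.factorial_succ]
    push_cast
    field_simp
end

section
/- Let z, w ∈ ℂ satisfy |z| < |w|, and assume z is not a negative odd integer (so that (z−1)/2 + j ≠ 0 for every integer j ≥ 1). Then the series Σ_{k=1}^{∞} (k − 1/2) · (z/w)^k · ( ∏_{j=1}^{k−1} ((w+1)/2 − j) ) / ( ∏_{j=1}^{k} ((z−1)/2 + j) ) converges absolutely, and its sum equals z/(z+w). (This is the evaluation of the positive-energy part C₊ in the computation of the commutator [𝓑̃(z), 𝓑̃(w)] = (zw/u)·δ(z,−w): the k-th term is (k − 1/2)(z/w)^k / ((z'+1)_k (w'+1)_{1−k}) with z' = (z−1)/2, w' = (w−1)/2 and Pochhammer symbols (x)_k, since 1/(w'+1)_{1−k}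 = ∏_{j=1}^{k−1}(w'+1−j).) -/
open scoped BigOperators

/-- The k-th term of the series C₊ in the computation of the commutator
[𝓑̃(z), 𝓑̃(w)]: (k − 1/2)·(z/w)^k·(∏_{j=1}^{k−1}((w+1)/2 − j))/(∏_{j=1}^{k}((z−1)/2 + j)),
i.e. (k − 1/2)(z/w)^k / ((z'+1)_k (w'+1)_{1−k}) with z' = (z−1)/2, w' = (w−1)/2. -/
noncomputable def Cplusterm (z w : ℂ) (k : ℕ) : ℂ :=
  ((k : ℂ) - 1 / 2) * (z / w) ^ k *
    (∏ j ∈ Finset.Icc 1 (k - 1), ((w + 1) / 2 - (j : ℂ))) /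
    (∏ j ∈ Finset.Icc 1 k, ((z - 1) / 2 + (j : ℂ)))

/-- Auxiliary telescoping sequence. -/
noncomputable def Caux (z w : ℂ) (k : ℕ) : ℂ :=
  w / (z + w) * (z / w) ^ k *
    ∏ j ∈ Finset.Icc 1 (k - 1), (((w + 1) / 2 - (j : ℂ)) / ((z - 1) / 2 + (j : ℂ)))

lemma Caux_succ (z w : ℂ) (k : ℕ) :
    Caux z w (k + 2) =
      (z / w) * (((w + 1) / 2 - ((k : ℂ) + 1)) / ((z - 1) / 2 + ((k : ℂ) + 1))) *
        Caux z w (k + 1) := by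
  unfold Caux
  rw [show k + 2 - 1 = k + 1 from rfl, show k + 1 - 1 = k from rfl,
    Finset.prod_Icc_succ_top (Nat.le_add_left 1 k)]
  push_cast
  ring

set_option maxHeartbeats 1000000 in
lemma Caux_telescope (z w : ℂ) (hw : w ≠ 0) (hzw : z + w ≠ 0)
    (hden : ∀ j : ℕ, 1 ≤ j → (z - 1) / 2 + (j : ℂ) ≠ 0) (k : ℕ) :
    Cplusterm z w (k + 1) = Caux z w (k + 1) - Caux z w (k + 2) := by
  have hQ : (∏ j ∈ Finset.Icc 1 k, ((z - 1) / 2 + (j : ℂ))) ≠ 0 :=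
    Finset.prod_ne_zero_iff.mpr fun j hj => hden j (Finset.mem_Icc.mp hj).1
  have hd : (z - 1) / 2 + ((k : ℂ) + 1) ≠ 0 := by
    have := hden (k + 1) (by omega); push_cast at this; exact this
  have hstep : (1 : ℂ) -
      (z / w) * (((w + 1) / 2 - ((k : ℂ) + 1)) / ((z - 1) / 2 + ((k : ℂ) + 1)))
      = ((((k : ℂ) + 1) - 1 / 2) * (z + w) / w) / ((z - 1) / 2 + ((k : ℂ) + 1)) := by
    have e : (z / w) * (((w + 1) / 2 - ((k : ℂ) + 1)) / ((z - 1) / 2 + ((k : ℂ) + 1)))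
        = (z * ((w + 1) / 2 - ((k : ℂ) + 1)) / w) / ((z - 1) / 2 + ((k : ℂ) + 1)) := by
      ring
    rw [e, eq_div_iff hd, sub_mul, one_mul, div_mul_cancel₀ _ hd]
    field_simp
    ring
  rw [Caux_succ]
  have hfac : Caux z w (k + 1) -
      (z / w) * (((w + 1) / 2 - ((k : ℂ) + 1)) / ((z - 1) / 2 + ((k : ℂ) + 1))) *
        Caux z w (k + 1)
      = ((1 : ℂ) -
          (z / w) * (((w + 1) / 2 - ((k : ℂ) + 1)) / ((z - 1) / 2 + ((k : ℂ) + 1)))) *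
        Caux z w (k + 1) := by ring
  rw [hfac, hstep]
  unfold Cplusterm Caux
  rw [show k + 1 - 1 = k from rfl, Finset.prod_div_distrib,
    Finset.prod_Icc_succ_top (Nat.le_add_left 1 k)]
  push_cast
  generalize hgen : (z - 1) / 2 + ((k : ℂ) + 1) = dd at hd ⊢
  generalize hPg : (∏ j ∈ Finset.Icc 1 k, ((w + 1) / 2 - (j : ℂ))) = P
  generalize hQg : (∏ j ∈ Finset.Icc 1 k, ((z - 1) / 2 + (j : ℂ))) = Q at hQ ⊢
  generalize hSg : z + w = S at hzw ⊢
  generalize hxg : (z / w) ^ (k + 1) = x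
  field_simp

/-- for z, w ∈ ℂ with |z| < |w| and z not a negative odd integer, the series
Σ_{k=1}^{∞} (k − 1/2)·(z/w)^k·(∏_{j=1}^{k−1}((w+1)/2 − j))/(∏_{j=1}^{k}((z−1)/2 + j))
converges absolutely, with sum z/(z+w). -/
theorem Cplus_eval (z w : ℂ)
    (hzw : ‖z‖ < ‖w‖)
    (hz : ∀ n : ℕ, z ≠ -(2 * (n : ℂ) + 1)) :
    Summable (fun k : ℕ => ‖Cplusterm z w (k + 1)‖) ∧
      HasSum (fun k : ℕ => Cplusterm z w (k + 1)) (z / (z + w)) := by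
  have hw : w ≠ 0 := by
    intro h; rw [h] at hzw; simp at hzw
    exact (norm_nonneg z).not_gt hzw
  have hzw' : z + w ≠ 0 := by
    intro h
    have : z = -w := by linear_combination h
    rw [this] at hzw; simp at hzw
  have hden : ∀ j : ℕ, 1 ≤ j → (z - 1) / 2 + (j : ℂ) ≠ 0 := by
    intro j hj heq
    apply hz (j - 1)
    have : ((j - 1 : ℕ) : ℂ) = (j : ℂ) - 1 := by
      push_cast [Nat.cast_sub hj]; ring
    rw [this]
    linear_combination 2 * heq
  -- the ratio tends to -z/w in norm |z/w| < 1
  have hratio : Filter.Tendsto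
      (fun k : ℕ => (z / w) * (((w + 1) / 2 - (k : ℂ)) / ((z - 1) / 2 + (k : ℂ))))
      Filter.atTop (nhds (-(z / w))) := by
    have h1 : Filter.Tendsto
        (fun k : ℕ => ((w + 1) / 2 + (-1 : ℂ) * k) / ((z - 1) / 2 + (1 : ℂ) * k))
        Filter.atTop (nhds ((-1 : ℂ) / 1)) :=
      tendsto_add_mul_div_add_mul_atTop_nhds _ _ _ one_ne_zero
    have h2 := h1.const_mul (z / w)
    have e1 : (fun k : ℕ => (z / w) * (((w + 1) / 2 + (-1 : ℂ) * k) / ((z - 1) / 2 + (1 : ℂ) * k)))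
        = (fun k : ℕ => (z / w) * (((w + 1) / 2 - (k : ℂ)) / ((z - 1) / 2 + (k : ℂ)))) := by
      funext k; ring
    have e2 : (z / w) * ((-1 : ℂ) / 1) = -(z / w) := by norm_num
    rw [e1, e2] at h2; exact h2
  have hlt : ‖z / w‖ < 1 := by
    rw [norm_div, div_lt_one (norm_pos_iff.mpr hw)]; exact hzw
  set r : ℝ := (‖z / w‖ + 1) / 2 with hr
  have hr1 : r < 1 := by rw [hr]; linarith
  have hrpos : ‖z / w‖ < r := by rw [hr]; linarith
  -- eventually the step ratio has norm ≤ r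
  have hev : ∀ᶠ k : ℕ in Filter.atTop,
      ‖(z / w) * (((w + 1) / 2 - (k : ℂ)) / ((z - 1) / 2 + (k : ℂ)))‖ ≤ r := by
    have hlt' : ‖-(z / w)‖ < r := by
      rw [norm_neg]; exact hrpos
    exact hratio.norm.eventually (eventually_le_nhds hlt')
  have hevc : ∀ᶠ k in Filter.atTop,
      ‖Caux z w (k + 1 + 1)‖ ≤ r * ‖Caux z w (k + 1)‖ := by
    rw [Filter.eventually_atTop] at hev ⊢
    obtain ⟨M, hM⟩ := hev
    refine ⟨M, fun n hn => ?_⟩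
    rw [show n + 1 + 1 = n + 2 from rfl, Caux_succ, norm_mul]
    have h1 : ‖(z / w) * (((w + 1) / 2 - ((n : ℂ) + 1)) / ((z - 1) / 2 + ((n : ℂ) + 1)))‖ ≤ r := by
      have := hM (n + 1) (by omega); push_cast at this; exact this
    exact mul_le_mul_of_nonneg_right h1 (norm_nonneg _)
  -- summability of the auxiliary sequence
  have hsumc : Summable (fun k : ℕ => Caux z w (k + 1)) :=
    summable_of_ratio_norm_eventually_le hr1 hevc
  have hsumcn : Summable (fun k : ℕ => ‖Caux z w (k + 1)‖) := by
    apply summable_of_ratio_norm_eventually_le hr1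
    refine hevc.mono fun n hn => ?_
    simpa [Real.norm_of_nonneg (norm_nonneg _)] using hn
  have hsumcn' : Summable (fun k : ℕ => ‖Caux z w (k + 2)‖) := by
    have := (summable_nat_add_iff 1).mpr hsumcn
    simpa [show ∀ k : ℕ, k + 1 + 1 = k + 2 from fun k => rfl] using this
  -- absolute convergence
  have habs : Summable (fun k : ℕ => ‖Cplusterm z w (k + 1)‖) := by
    apply Summable.of_nonneg_of_le (fun k => (norm_nonneg _))
      (fun k => ?_) (hsumcn.add hsumcn')
    rw [Caux_telescope z w hw hzw' hden k]
    exact (norm_sub_le _ _)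
  refine ⟨habs, ?_⟩
  have hsum : Summable (fun k : ℕ => Cplusterm z w (k + 1)) := by
    apply Summable.of_norm; simpa using habs
  -- identify the sum via telescoping partial sums
  have hc0 : Filter.Tendsto (fun n : ℕ => Caux z w (n + 1)) Filter.atTop (nhds 0) :=
    hsumc.tendsto_atTop_zero
  have hpartial : ∀ n : ℕ,
      (∑ i ∈ Finset.range n, Cplusterm z w (i + 1)) = Caux z w 1 - Caux z w (n + 1) := by
    intro n
    calc (∑ i ∈ Finset.range n, Cplusterm z w (i + 1))
        = ∑ i ∈ Finset.range n, (Caux z w (i + 1) - Caux z w (i + 1 + 1)) := by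
          apply Finset.sum_congr rfl
          intro i _
          rw [Caux_telescope z w hw hzw' hden i]
      _ = Caux z w (0 + 1) - Caux z w (n + 1) :=
          Finset.sum_range_sub' (fun i => Caux z w (i + 1)) n
      _ = Caux z w 1 - Caux z w (n + 1) := by norm_num
  have hC1 : Caux z w 1 = z / (z + w) := by
    unfold Caux
    norm_num
    field_simp
  have htend : Filter.Tendsto (fun n : ℕ => ∑ i ∈ Finset.range n, Cplusterm z w (i + 1))
      Filter.atTop (nhds (z / (z + w))) := by
    simp only [hpartial, hC1]
    have h := (tendsto_const_nhds (x := z / (z + w)) (f := Filter.atTop (α := ℕ))).sub hc0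
    simpa using h
  have H := hsum.hasSum
  have := H.tendsto_sum_nat
  have heq := tendsto_nhds_unique this htend
  rwa [heq] at H
end
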